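/- Consider two DAGs G and G' with the same skeleton whose topological orderings differ only by altering the position of one node z (with x preceding y in both). If z does not belong to rch(G,x,y) ∪ forb(G,x,y) ∪ de_G(clr(G,x,y)) ∪ pa_G(forb(G,x,y) ∪ de_G(clr(G,x,y))), then all of the following hold: G_{rch(G,x,y)} = G'_{rch(G',x,y)}, clr(G,x,y) = clr(G',x,y), forb(G,x,y) = forb(G',x,y), and de_G(c) = de_{G'}(c) for every c ∈ clr(G,x,y). -/

import Mathlib

/-- Adjacency in the skeleton of a digraph given by edge relation `G`. -/
def skelAdj {V : Type*} (G : V → V → Prop) (a b : V) : Prop := G a b ∨ G b a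

/-- A digraph is acyclic (a DAG) if it has no directed cycle. -/
def IsAcyclicDigraph {V : Type*} (G : V → V → Prop) : Prop :=
  ∀ v, ¬ Relation.TransGen G v v

/-- A path: a list of distinct vertices in which consecutive vertices are
joined by an edge (of either orientation). -/
def IsPath {V : Type*} (G : V → V → Prop) (p : List V) : Prop :=
  p.Nodup ∧ p.Chain' (skelAdj G)

/-- A path between `x` and `y` (written from `x` to `y`). -/
def IsPathBetween {V : Type*} (G : V → V → Prop) (x y : V) (p : List V) : Prop :=
  IsPath G p ∧ p.head? = some x ∧ p.getLast? = some y

/-- A directed (causal) path from `x` to `y`: every edge points towards `y`. -/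
def IsDirPath {V : Type*} (G : V → V → Prop) (x y : V) (p : List V) : Prop :=
  p.Nodup ∧ p.Chain' G ∧ p.head? = some x ∧ p.getLast? = some y

/-- `w` is a collider on the path `p`: both edges of `p` at `w` point into `w`. -/
def IsCollider {V : Type*} (G : V → V → Prop) (p : List V) (w : V) : Prop :=
  ∃ a b, [a, w, b] <:+: p ∧ G a w ∧ G b w

/-- Descendants of a vertex (including the vertex itself). -/
def descendants {V : Type*} (G : V → V → Prop) (v : V) : Set V :=
  {w | Relation.ReflTransGen G v w}

/-- Ancestors of a vertex (including the vertex itself). -/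
def ancestors {V : Type*} (G : V → V → Prop) (v : V) : Set V :=
  {w | Relation.ReflTransGen G w v}

/-- Parents of a vertex. -/
def parents {V : Type*} (G : V → V → Prop) (v : V) : Set V := {w | G w v}

/-- Descendants of a set of vertices. -/
def descendantsSet {V : Type*} (G : V → V → Prop) (W : Set V) : Set V :=
  ⋃ v ∈ W, descendants G v

/-- Ancestors of a set of vertices. -/
def ancestorsSet {V : Type*} (G : V → V → Prop) (W : Set V) : Set V :=
  ⋃ v ∈ W, ancestors G v

/-- Parents of a set of vertices. -/
def parentsSet {V : Type*} (G : V → V → Prop) (W : Set V) : Set V :=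
  ⋃ v ∈ W, parents G v

/-- A path `p` is blocked by a vertex set `A`: it contains a non-collider in `A`,
or a collider `c` with `descendants G c ∩ A = ∅`. -/
def Blocked {V : Type*} (G : V → V → Prop) (A : Set V) (p : List V) : Prop :=
  (∃ w ∈ p, ¬ IsCollider G p w ∧ w ∈ A) ∨
    (∃ c, IsCollider G p c ∧ descendants G c ∩ A = ∅)

/-- `cn G x y`: vertices `z ≠ x` lying on some directed path from `x` to `y`. -/
def cn {V : Type*} (G : V → V → Prop) (x y : V) : Set V :=
  {z | z ≠ x ∧ ∃ p, IsDirPath G x y p ∧ z ∈ p}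

/-- The forbidden set `forb G x y = de(cn(G,x,y)) ∪ {x}`. -/
def forb {V : Type*} (G : V → V → Prop) (x y : V) : Set V :=
  descendantsSet G (cn G x y) ∪ {x}

/-- `A ⊆ V \ {x,y}` is a valid adjustment set in `G`:
(i) `A ∩ forb(G,x,y) = ∅`, and (ii) every non-causal path from `x` to `y` is
blocked by `A`. -/
def IsValidAdjustment {V : Type*} (G : V → V → Prop) (x y : V) (A : Set V) : Prop :=
  x ∉ A ∧ y ∉ A ∧ A ∩ forb G x y = ∅ ∧
    ∀ p, IsPathBetween G x y p → ¬ p.Chain' G → Blocked G A p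

/-- `rch G x y`: vertices lying on some path between `x` and `y` in the skeleton. -/
def rch {V : Type*} (G : V → V → Prop) (x y : V) : Set V :=
  {z | ∃ p, IsPathBetween G x y p ∧ z ∈ p}

/-- Induced subgraph of `G` on a vertex set `S`. -/
def induce {V : Type*} (G : V → V → Prop) (S : Set V) : V → V → Prop :=
  fun a b => G a b ∧ a ∈ S ∧ b ∈ S

/-- `clr G x y`: all colliders on any path from `x` to `y` in the induced
subgraph of `G` on `rch G x y`. -/
def clr {V : Type*} (G : V → V → Prop) (x y : V) : Set V :=
  {c | ∃ p, IsPathBetween (induce G (rch G x y)) x y p ∧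
      IsCollider (induce G (rch G x y)) p c}

/-- The optimal adjustment set `opadj G x y = pa(cn(G,x,y)) \ forb(G,x,y)`. -/
def opadj {V : Type*} (G : V → V → Prop) (x y : V) : Set V :=
  parentsSet G (cn G x y) \ forb G x y

/-- `G^{pd}_{xy}`: `G` with every edge from `x` to a child of `x` that is an
ancestor of `y` removed. -/
def pdGraph {V : Type*} (G : V → V → Prop) (x y : V) : V → V → Prop :=
  fun a b => G a b ∧ ¬ (a = x ∧ b ∈ ancestors G y)

/-- `τ` is a topological ordering of `G`. -/
def IsTopOrder {V : Type*} (G : V → V → Prop) (τ : V → ℕ) : Prop :=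
  Function.Injective τ ∧ ∀ a b, G a b → τ a < τ b

/-- `G'` is obtained from `G` by altering the position of the single node `z`
in a topological ordering of `G` (keeping the skeleton and the orientation of
all edges not incident to `z`, and reorienting edges incident to `z` according
to the new ordering), with `x` preceding `y` in both orderings. -/
def AlterOne {V : Type*} (G G' : V → V → Prop) (z x y : V) : Prop :=
  ∃ τ τ' : V → ℕ,
    IsTopOrder G τ ∧ IsTopOrder G' τ' ∧
    τ x < τ y ∧ τ' x < τ' y ∧
    (∀ a b, a ≠ z → b ≠ z → (τ a < τ b ↔ τ' a < τ' b)) ∧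
    (∀ a b, a ≠ z → b ≠ z → (G a b ↔ G' a b)) ∧
    (∀ a b, a = z ∨ b = z → (G' a b ↔ (skelAdj G a b ∧ τ' a < τ' b)))

/-- Transfer a chain along an implication that may use membership. -/
lemma chain'_transfer {V : Type*} {R S : V → V → Prop} :
    ∀ {p : List V}, (∀ a ∈ p, ∀ b ∈ p, R a b → S a b) → p.Chain' R → p.Chain' S := by
  intro p
  induction p with
  | nil => intro _ _; exact List.isChain_nil
  | cons a t ih =>
    cases t with
    | nil => intro _ _; exact List.isChain_singleton a
    | cons b t' =>
      intro h hc
      simp only [List.Chain', List.isChain_cons_cons] at hc ⊢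
      refine ⟨h a (by simp) b (by simp) hc.1, ih ?_ hc.2⟩
      intro u hu v hv
      exact h u (List.mem_cons_of_mem a hu) v (List.mem_cons_of_mem a hv)

/-- Key descendant-transfer lemma. -/
lemma desc_transfer {V : Type*} {G G' : V → V → Prop} {z : V} (S : Set V)
    (hedge : ∀ a b, a ≠ z → b ≠ z → (G a b ↔ G' a b))
    (hskel : ∀ u, G' u z → G u z ∨ G z u)
    (hclosed : ∀ u w, u ∈ S → G u w → w ∈ S)
    (hzS : z ∉ S)
    (hnopar : ∀ u ∈ S, ¬ G z u)
    {c : V} (hc : c ∈ S) :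
    descendants G c = descendants G' c := by
  have hmemS : ∀ w, Relation.ReflTransGen G c w → w ∈ S := by
    intro w hw
    induction hw with
    | refl => exact hc
    | tail h1 h2 ih => exact hclosed _ _ ih h2
  ext w
  simp only [descendants, Set.mem_setOf_eq]
  constructor
  · intro hw
    induction hw with
    | refl => exact Relation.ReflTransGen.refl
    | @tail u w h1 h2 ih =>
      have hu := hmemS _ h1
      have hwS := hclosed _ _ hu h2
      exact ih.tail ((hedge _ _ (fun e => hzS (e ▸ hu)) (fun e => hzS (e ▸ hwS))).mp h2)
  · intro hw
    induction hw with
    | refl => exact Relation.ReflTransGen.refl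
    | @tail u w h1 h2 ih =>
      have hu := hmemS _ ih
      have hune : u ≠ z := fun e => hzS (e ▸ hu)
      have hwne : w ≠ z := by
        intro e; subst e
        rcases hskel u h2 with h | h
        · exact hzS (hclosed _ _ hu h)
        · exact hnopar u hu h
      exact ih.tail ((hedge _ _ hune hwne).mpr h2)

/-- Lemma: good node. -/
theorem statement1 {V : Type*} (G G' : V → V → Prop) (z x y : V)
    (halt : AlterOne G G' z x y)
    (hz : z ∉ rch G x y ∪ forb G x y ∪ descendantsSet G (clr G x y) ∪
      parentsSet G (forb G x y ∪ descendantsSet G (clr G x y))) :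
    induce G (rch G x y) = induce G' (rch G' x y) ∧
    clr G x y = clr G' x y ∧
    forb G x y = forb G' x y ∧
    ∀ c ∈ clr G x y, descendants G c = descendants G' c := by
  obtain ⟨τ, τ', ⟨hinjτ, hordG⟩, ⟨hinjτ', hordG'⟩, hxy, hxy', hcmp, hedge, hze⟩ := halt
  simp only [Set.mem_union, not_or] at hz
  obtain ⟨⟨⟨hzrch, hzforb⟩, hzdeclr⟩, hzP⟩ := hz
  -- no edge from z into forb ∪ de(clr)
  have hnp : ∀ u ∈ forb G x y ∪ descendantsSet G (clr G x y), ¬ G z u :=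
    fun u hu h => hzP (Set.mem_biUnion hu h)
  -- irreflexivity / no skeleton loops
  have hne_of_skel : ∀ a b, skelAdj G a b → a ≠ b := by
    rintro a b (h | h) rfl
    · exact lt_irrefl _ (hordG _ _ h)
    · exact lt_irrefl _ (hordG _ _ h)
  -- skeletons agree
  have hskel_eq : skelAdj G = skelAdj G' := by
    funext a b
    apply propext
    by_cases haz : a = z ∨ b = z
    · have h1 := hze a b haz
      have h2 := hze b a haz.symm
      constructor
      · intro h
        have hab : a ≠ b := hne_of_skel a b h
        have hne : τ' a ≠ τ' b := fun e => hab (hinjτ' e)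
        rcases lt_or_gt_of_ne hne with hlt | hgt
        · exact Or.inl (h1.mpr ⟨h, hlt⟩)
        · exact Or.inr (h2.mpr ⟨h.symm, hgt⟩)
      · rintro (h | h)
        · exact (h1.mp h).1
        · exact ((h2.mp h).1).symm
    · push_neg at haz
      constructor
      · rintro (h | h)
        · exact Or.inl ((hedge a b haz.1 haz.2).mp h)
        · exact Or.inr ((hedge b a haz.2 haz.1).mp h)
      · rintro (h | h)
        · exact Or.inl ((hedge a b haz.1 haz.2).mpr h)
        · exact Or.inr ((hedge b a haz.2 haz.1).mpr h)
  -- rch agree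
  have hrch : rch G x y = rch G' x y := by
    simp only [rch, IsPathBetween, IsPath, hskel_eq]
  -- induced graphs agree
  have hind : induce G (rch G x y) = induce G' (rch G' x y) := by
    rw [← hrch]
    funext a b
    apply propext
    constructor
    · rintro ⟨hab, haR, hbR⟩
      exact ⟨(hedge a b (fun e => hzrch (e ▸ haR)) (fun e => hzrch (e ▸ hbR))).mp hab,
        haR, hbR⟩
    · rintro ⟨hab, haR, hbR⟩
      exact ⟨(hedge a b (fun e => hzrch (e ▸ haR)) (fun e => hzrch (e ▸ hbR))).mpr hab,
        haR, hbR⟩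
  -- clr agree
  have hclr : clr G x y = clr G' x y := by
    simp only [clr, hind]
  -- directed paths lie in rch
  have hdirmemG : ∀ p, IsDirPath G x y p → ∀ v ∈ p, v ∈ rch G x y := by
    intro p hp v hv
    exact ⟨p, ⟨⟨hp.1, List.IsChain.imp (fun a b h => Or.inl h) hp.2.1⟩,
      hp.2.2.1, hp.2.2.2⟩, hv⟩
  have hdirmemG' : ∀ p, IsDirPath G' x y p → ∀ v ∈ p, v ∈ rch G x y := by
    intro p hp v hv
    rw [hrch]
    exact ⟨p, ⟨⟨hp.1, List.IsChain.imp (fun a b h => Or.inl h) hp.2.1⟩,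
      hp.2.2.1, hp.2.2.2⟩, hv⟩
  have hdir : ∀ p, IsDirPath G x y p ↔ IsDirPath G' x y p := by
    intro p
    constructor
    · rintro ⟨hnd, hch, hh, hl⟩
      refine ⟨hnd, chain'_transfer ?_ hch, hh, hl⟩
      intro a ha b hb h
      exact (hedge a b (fun e => hzrch (e ▸ hdirmemG p ⟨hnd, hch, hh, hl⟩ a ha))
        (fun e => hzrch (e ▸ hdirmemG p ⟨hnd, hch, hh, hl⟩ b hb))).mp h
    · rintro ⟨hnd, hch, hh, hl⟩
      refine ⟨hnd, chain'_transfer ?_ hch, hh, hl⟩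
      intro a ha b hb h
      exact (hedge a b (fun e => hzrch (e ▸ hdirmemG' p ⟨hnd, hch, hh, hl⟩ a ha))
        (fun e => hzrch (e ▸ hdirmemG' p ⟨hnd, hch, hh, hl⟩ b hb))).mpr h
  -- cn agree
  have hcn : cn G x y = cn G' x y := by
    ext v
    simp only [cn, Set.mem_setOf_eq]
    constructor
    · rintro ⟨h1, p, hp, hm⟩
      exact ⟨h1, p, (hdir p).mp hp, hm⟩
    · rintro ⟨h1, p, hp, hm⟩
      exact ⟨h1, p, (hdir p).mpr hp, hm⟩
  -- common ingredients for desc_transfer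
  have hskz : ∀ u, G' u z → G u z ∨ G z u := fun u h => ((hze u z (Or.inr rfl)).mp h).1
  -- forb agree
  have hforbS_closed : ∀ u w, u ∈ descendantsSet G (cn G x y) → G u w →
      w ∈ descendantsSet G (cn G x y) := by
    intro u w hu huw
    obtain ⟨v, hv, hrt⟩ := Set.mem_iUnion₂.mp hu
    exact Set.mem_biUnion hv (Relation.ReflTransGen.tail hrt huw)
  have hzS1 : z ∉ descendantsSet G (cn G x y) := fun h => hzforb (Or.inl h)
  have hdcn : descendantsSet G (cn G x y) = descendantsSet G' (cn G' x y) := by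
    rw [← hcn]
    apply Set.iUnion₂_congr
    intro c hc
    exact desc_transfer (descendantsSet G (cn G x y)) hedge hskz hforbS_closed hzS1
      (fun u hu h => hnp u (Or.inl (Or.inl hu)) h)
      (Set.mem_biUnion hc Relation.ReflTransGen.refl)
  have hforb : forb G x y = forb G' x y := by
    simp only [forb, hdcn]
  -- descendants of colliders agree
  have hclrS_closed : ∀ u w, u ∈ descendantsSet G (clr G x y) → G u w →
      w ∈ descendantsSet G (clr G x y) := by
    intro u w hu huw
    obtain ⟨v, hv, hrt⟩ := Set.mem_iUnion₂.mp hu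
    exact Set.mem_biUnion hv (Relation.ReflTransGen.tail hrt huw)
  refine ⟨hind, hclr, hforb, ?_⟩
  intro c hc
  exact desc_transfer (descendantsSet G (clr G x y)) hedge hskz hclrS_closed hzdeclr
    (fun u hu h => hnp u (Or.inr hu) h)
    (Set.mem_biUnion hc Relation.ReflTransGen.refl)
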